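/- For Lebesgue-almost every α ∈ (0,1), a_{k+1}(α) ≤ q_k(α) holds for all sufficiently large k, and consequently there exist constants c > 0 (depending on α) with Σ_{m=1}^M 1/‖mα‖ ≥ c · M log M for all large M. -/

import Mathlib

open Filter MeasureTheory Real

/-- Distance from `x` to the nearest integer. -/
noncomputable def nd (x : ℝ) : ℝ := |x - round x|

/-- The Gauss map `x ↦ frac (1/x)` (with `0 ↦ 0`). -/
noncomputable def gaussMap (x : ℝ) : ℝ := Int.fract x⁻¹

/-- The `k`-th partial quotient of the continued fraction of `α` (for `k ≥ 1`). -/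
noncomputable def cfA (α : ℝ) (k : ℕ) : ℕ := ⌊(gaussMap^[k-1] α)⁻¹⌋₊

/-- Denominators of the continued fraction convergents of `α`. -/
noncomputable def cfQ (α : ℝ) : ℕ → ℕ
  | 0 => 1
  | 1 => cfA α 1
  | (k+2) => cfA α (k+2) * cfQ α (k+1) + cfQ α k

/-- Numerators of the continued fraction convergents of `α`. -/
noncomputable def cfP (α : ℝ) : ℕ → ℕ
  | 0 => 0
  | 1 => 1
  | (k+2) => cfA α (k+2) * cfP α (k+1) + cfP α k

/-- `S α M = ∑_{m=1}^M 1/‖mα‖`. -/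
noncomputable def S (α : ℝ) (M : ℕ) : ℝ := ∑ m ∈ Finset.Icc 1 M, 1 / nd (m * α)


noncomputable def cfErr (α : ℝ) (k : ℕ) : ℝ := cfQ α k * α - cfP α k
noncomputable def cfPi (α : ℝ) (k : ℕ) : ℝ := ∏ j ∈ Finset.range k, gaussMap^[j] α

noncomputable def Bset (n : ℕ) : Set ℝ :=
  ⋃ p ∈ Finset.range (n+1), Metric.closedBall ((p:ℝ)/n) (1/(n:ℝ)^3)

lemma Bset_vol (n : ℕ) : volume (Bset n) ≤ ENNReal.ofReal (4 / (n:ℝ)^2) := by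
  have h1 : volume (Bset n) ≤ ∑ p ∈ Finset.range (n+1), volume (Metric.closedBall ((p:ℝ)/n) (1/(n:ℝ)^3)) :=
    measure_biUnion_finset_le _ _
  rcases Nat.eq_zero_or_pos n with rfl | hn
  · refine le_trans h1 ?_
    norm_num [Real.volume_closedBall]
  · have h2 : ∀ p ∈ Finset.range (n+1),
        volume (Metric.closedBall ((p:ℝ)/n) (1/(n:ℝ)^3)) = ENNReal.ofReal (2/(n:ℝ)^3) := by
      intro p _
      rw [Real.volume_closedBall]
      congr 1
      ring
    rw [Finset.sum_congr rfl h2, Finset.sum_const, Finset.card_range, nsmul_eq_mul] at h1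
    refine h1.trans ?_
    rw [← ENNReal.ofReal_natCast (n+1), ← ENNReal.ofReal_mul (by positivity)]
    apply ENNReal.ofReal_le_ofReal
    have hn' : (1:ℝ) ≤ n := by exact_mod_cast hn
    push_cast
    have he : ((n:ℝ)+1) * (2/(n:ℝ)^3) = (2*(n:ℝ)+2)/(n:ℝ)^3 := by ring
    rw [he, div_le_div_iff₀ (by positivity) (by positivity)]
    nlinarith

lemma Bset_sum : (∑' n, volume (Bset n)) ≠ ⊤ := by
  have h2 : Summable (fun n : ℕ => 4 / (n:ℝ)^2) := by
    have := (Real.summable_one_div_nat_pow (p := 2)).mpr (by norm_num)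
    simpa [div_eq_mul_inv] using this.mul_left 4
  apply ne_top_of_le_ne_top (b := ENNReal.ofReal (∑' n : ℕ, 4 / (n:ℝ)^2)) ENNReal.ofReal_ne_top
  calc ∑' n, volume (Bset n) ≤ ∑' n : ℕ, ENNReal.ofReal (4/(n:ℝ)^2) := ENNReal.tsum_le_tsum Bset_vol
    _ = ENNReal.ofReal (∑' n : ℕ, 4/(n:ℝ)^2) := (ENNReal.ofReal_tsum_of_nonneg (fun n => by positivity) h2).symm

lemma aux_log_sum (J : ℕ) : Real.log (J+2) ≤ 1 + ∑ j ∈ Finset.Icc 1 J, (1:ℝ)/(j+1) := by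
  induction J with
  | zero =>
    simpa using le_trans Real.log_two_lt_d9.le (by norm_num)
  | succ n ih =>
    rw [Finset.sum_Icc_succ_top (by omega)]
    have hstep : Real.log ((n:ℝ)+3) - Real.log ((n:ℝ)+2) ≤ 1/((n:ℝ)+2) := by
      rw [← Real.log_div (by positivity) (by positivity)]
      have h2 : Real.log (((n:ℝ)+3)/((n:ℝ)+2)) ≤ ((n:ℝ)+3)/((n:ℝ)+2) - 1 :=
        Real.log_le_sub_one_of_pos (by positivity)
      have h3 : ((n:ℝ)+3)/((n:ℝ)+2) - 1 = 1/((n:ℝ)+2) := by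
        field_simp
        ring
      linarith
    push_cast
    push_cast at ih
    have e1 : ((n:ℝ)+1+2) = (n:ℝ)+3 := by ring
    have e2 : ((n:ℝ)+1+1) = (n:ℝ)+2 := by ring
    rw [e1, e2]
    linarith

variable {α : ℝ}

lemma nd_nonneg (x : ℝ) : 0 ≤ nd x := abs_nonneg _
lemma nd_le (x : ℝ) (n : ℤ) : nd x ≤ |x - n| := round_le x n
lemma nd_pos {x : ℝ} (hx : Irrational x) : 0 < nd x := by
  rw [nd, abs_pos, sub_ne_zero]; exact hx.ne_int _



lemma gm_mem (hirr : Irrational α) (hmem : α ∈ Set.Ioo (0:ℝ) 1) (k : ℕ) :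
    gaussMap^[k] α ∈ Set.Ioo (0:ℝ) 1 ∧ Irrational (gaussMap^[k] α) := by
  induction k with
  | zero => exact ⟨hmem, hirr⟩
  | succ n ih =>
    obtain ⟨⟨h0, h1⟩, hi⟩ := ih
    rw [Function.iterate_succ_apply']
    have hinv : Irrational (gaussMap^[n] α)⁻¹ := hi.inv
    have hfr : Irrational (gaussMap (gaussMap^[n] α)) := by
      have := hinv.sub_intCast ⌊(gaussMap^[n] α)⁻¹⌋
      rw [gaussMap, Int.fract]
      exact this
    refine ⟨⟨?_, ?_⟩, hfr⟩
    · exact lt_of_le_of_ne (Int.fract_nonneg _) (Ne.symm (by simpa [gaussMap] using hfr.ne_zero))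
    · exact Int.fract_lt_one _

lemma inv_gm_eq (hirr : Irrational α) (hmem : α ∈ Set.Ioo (0:ℝ) 1) (k : ℕ) :
    (gaussMap^[k] α)⁻¹ = (cfA α (k+1) : ℝ) + gaussMap^[k+1] α := by
  obtain ⟨⟨h0, h1⟩, _⟩ := gm_mem hirr hmem k
  have h0' : (0:ℝ) ≤ (gaussMap^[k] α)⁻¹ := by positivity
  have : cfA α (k+1) = ⌊(gaussMap^[k] α)⁻¹⌋₊ := rfl
  rw [this, Function.iterate_succ_apply']
  show _ = _ + gaussMap (gaussMap^[k] α)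
  rw [gaussMap, natCast_floor_eq_intCast_floor h0', Int.fract]
  ring

lemma cfA_pos (hirr : Irrational α) (hmem : α ∈ Set.Ioo (0:ℝ) 1) (k : ℕ) :
    1 ≤ cfA α (k+1) := by
  obtain ⟨⟨h0, h1⟩, _⟩ := gm_mem hirr hmem k
  have h2 : (1:ℝ) ≤ (gaussMap^[k] α)⁻¹ := (one_le_inv₀ h0).mpr h1.le
  exact Nat.le_floor (by exact_mod_cast h2)
section basics
variable (hirr : Irrational α) (hmem : α ∈ Set.Ioo (0:ℝ) 1)
include hirr hmem

lemma cfQ_pos (k : ℕ) : 1 ≤ cfQ α k := by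
  induction k using Nat.twoStepInduction with
  | zero => simp [cfQ]
  | one => simpa [cfQ] using cfA_pos hirr hmem 0
  | more n ih ih1 =>
    have := cfA_pos hirr hmem (n+1)
    have h2 := ih
    simp only [cfQ]
    nlinarith

lemma cfA_mul_le (k : ℕ) : cfA α (k+1) * cfQ α k ≤ cfQ α (k+1) := by
  cases k with
  | zero => simp [cfQ]
  | succ n => rw [cfQ]; exact Nat.le_add_right _ _

lemma cfQ_le_succ (k : ℕ) : cfQ α k ≤ cfQ α (k+1) := by
  calc cfQ α k = 1 * cfQ α k := (one_mul _).symm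
    _ ≤ cfA α (k+1) * cfQ α k := Nat.mul_le_mul_right _ (cfA_pos hirr hmem k)
    _ ≤ cfQ α (k+1) := cfA_mul_le hirr hmem k

lemma cfQ_succ_lt (k : ℕ) : cfQ α (k+1) < cfQ α (k+2) := by
  have h1 := cfQ_pos hirr hmem k
  have h2 := cfQ_pos hirr hmem (k+1)
  have h3 := cfA_pos hirr hmem (k+1)
  rw [cfQ]
  nlinarith

lemma cfQ_ge_self (k : ℕ) : k ≤ cfQ α k := by
  induction k using Nat.twoStepInduction with
  | zero => simp
  | one => simpa using cfQ_pos hirr hmem 1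
  | more n ih ih1 =>
    have := cfQ_succ_lt hirr hmem n
    omega

lemma cfP_le_cfQ (k : ℕ) : cfP α k ≤ cfQ α k := by
  induction k using Nat.twoStepInduction with
  | zero => simp [cfP, cfQ]
  | one => simpa [cfP, cfQ] using cfA_pos hirr hmem 0
  | more n ih ih1 =>
    rw [cfP, cfQ]
    exact Nat.add_le_add (Nat.mul_le_mul_left _ ih1) ih

lemma cfDet (k : ℕ) : (cfP α (k+1) : ℤ) * cfQ α k - cfP α k * cfQ α (k+1) = (-1)^k := by
  induction k with
  | zero => simp [cfP, cfQ]
  | succ n ih =>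
    have e1 : (cfP α (n+2) : ℤ) = cfA α (n+2) * cfP α (n+1) + cfP α n := by
      rw [cfP]; push_cast; ring
    have e2 : (cfQ α (n+2) : ℤ) = cfA α (n+2) * cfQ α (n+1) + cfQ α n := by
      rw [cfQ]; push_cast; ring
    rw [e1, e2, pow_succ]
    linear_combination (-1 : ℤ) * ih

lemma cfCoprime (k : ℕ) : Nat.Coprime (cfP α k) (cfQ α k) := by
  have h := cfDet hirr hmem (α := α) k
  have hco : IsCoprime (cfP α k : ℤ) (cfQ α k : ℤ) := by
    rcases Nat.even_or_odd k with he | ho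
    · rw [he.neg_one_pow] at h
      exact ⟨-(cfQ α (k+1) : ℤ), (cfP α (k+1) : ℤ), by linarith⟩
    · rw [ho.neg_one_pow] at h
      exact ⟨(cfQ α (k+1) : ℤ), -(cfP α (k+1) : ℤ), by linarith⟩
  have := Int.isCoprime_iff_gcd_eq_one.mp hco
  rwa [Int.gcd_natCast_natCast] at this
end basics
section err
variable (hirr : Irrational α) (hmem : α ∈ Set.Ioo (0:ℝ) 1)
include hirr hmem

lemma cfPi_pos (k : ℕ) : 0 < cfPi α k :=
  Finset.prod_pos (fun j _ => (gm_mem hirr hmem j).1.1)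

lemma gm_key (k : ℕ) :
    gaussMap^[k] α * ((cfA α (k+1) : ℝ) + gaussMap^[k+1] α) = 1 := by
  rw [← inv_gm_eq hirr hmem k]
  exact mul_inv_cancel₀ (gm_mem hirr hmem k).1.1.ne'

lemma cfErr_eq (k : ℕ) : cfErr α k = (-1)^k * cfPi α (k+1) := by
  induction k using Nat.twoStepInduction with
  | zero =>
    simp [cfErr, cfPi, cfQ, cfP]
  | one =>
    have h := gm_key hirr hmem 0
    simp only [Function.iterate_zero_apply, Nat.zero_add] at h
    have hPi : cfPi α 2 = α * gaussMap^[1] α := by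
      simp [cfPi, Finset.prod_range_succ]
    have e : cfA α 1 = cfA α (0+1) := rfl
    simp only [cfErr, cfQ, cfP, pow_one, Nat.cast_one, hPi, e]
    linear_combination h
  | more n ih ih1 =>
    have hrec : cfErr α (n+2) = (cfA α (n+2) : ℝ) * cfErr α (n+1) + cfErr α n := by
      simp only [cfErr]
      rw [cfQ, cfP]
      push_cast
      ring
    have hkey := gm_key hirr hmem (n+1)
    have hPi1 : cfPi α (n+2) = cfPi α (n+1) * gaussMap^[n+1] α := Finset.prod_range_succ _ _
    have hPi2 : cfPi α (n+3) = cfPi α (n+2) * gaussMap^[n+2] α := Finset.prod_range_succ _ _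
    rw [hrec, ih, ih1, hPi1] at *
    rw [hPi2, hPi1]
    rw [pow_succ, pow_succ]
    linear_combination (-((-1:ℝ)^n) * cfPi α (n+1)) * hkey

lemma cfPi_inv (k : ℕ) :
    cfPi α (k+1) * ((cfQ α (k+1) : ℝ) + (cfQ α k : ℝ) * gaussMap^[k+1] α) = 1 := by
  induction k with
  | zero =>
    have h := gm_key hirr hmem 0
    simp only [Function.iterate_zero_apply, Nat.zero_add] at h
    have hPi : cfPi α 1 = α := by simp [cfPi]
    show cfPi α 1 * ((cfQ α 1 : ℝ) + (cfQ α 0 : ℝ) * gaussMap^[1] α) = 1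
    simp only [cfQ, Nat.cast_one, hPi]
    linear_combination h
  | succ n ih =>
    have hkey := gm_key hirr hmem (n+1)
    have hPi1 : cfPi α (n+2) = cfPi α (n+1) * gaussMap^[n+1] α := Finset.prod_range_succ _ _
    have hq : (cfQ α (n+2) : ℝ) = (cfA α (n+2) : ℝ) * cfQ α (n+1) + cfQ α n := by
      rw [cfQ]; push_cast; ring
    rw [hPi1, hq]
    linear_combination (cfPi α (n+1) * (cfQ α (n+1) : ℝ)) * hkey + ih

lemma abs_cfErr (k : ℕ) : |cfErr α k| = cfPi α (k+1) := by
  rw [cfErr_eq hirr hmem, abs_mul, abs_pow, abs_neg, abs_one, one_pow, one_mul,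
    abs_of_pos (cfPi_pos hirr hmem (k+1))]

lemma abs_cfErr_le (k : ℕ) : |cfErr α k| ≤ 1 / (cfQ α (k+1) : ℝ) := by
  rw [abs_cfErr hirr hmem]
  have h := cfPi_inv hirr hmem k
  have hq1 : (0:ℝ) < cfQ α (k+1) := by exact_mod_cast cfQ_pos hirr hmem (k+1)
  have hx : 0 < gaussMap^[k+1] α := (gm_mem hirr hmem (k+1)).1.1
  have hq0 : (0:ℝ) ≤ cfQ α k := Nat.cast_nonneg _
  have h := cfPi_inv hirr hmem k
  have hD : (0:ℝ) < (cfQ α (k+1) : ℝ) + (cfQ α k : ℝ) * gaussMap^[k+1] α := by positivity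
  have hPi : cfPi α (k+1) = 1 / ((cfQ α (k+1) : ℝ) + (cfQ α k : ℝ) * gaussMap^[k+1] α) := by
    rw [eq_div_iff hD.ne']
    exact h
  rw [hPi]
  apply one_div_le_one_div_of_le hq1
  nlinarith [mul_nonneg hq0 hx.le]
end err
lemma conj1 (hirr : Irrational α) (hmem : α ∈ Set.Ioo (0:ℝ) 1)
    (hB : ∀ᶠ n in atTop, α ∉ Bset n) :
    ∀ᶠ k in atTop, cfA α (k+1) ≤ cfQ α k := by
  obtain ⟨N, hN⟩ := eventually_atTop.mp hB
  rw [eventually_atTop]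
  refine ⟨N, fun k hk => ?_⟩
  by_contra hcon
  push_neg at hcon
  have hqN : N ≤ cfQ α k := le_trans hk (cfQ_ge_self hirr hmem k)
  apply hN (cfQ α k) hqN
  -- show α ∈ Bset (cfQ α k)
  have hq : (0:ℝ) < cfQ α k := by exact_mod_cast cfQ_pos hirr hmem k
  have hq1 : (cfQ α k + 1) * cfQ α k ≤ cfQ α (k+1) := by
    calc (cfQ α k + 1) * cfQ α k ≤ cfA α (k+1) * cfQ α k :=
          Nat.mul_le_mul_right _ hcon
      _ ≤ cfQ α (k+1) := cfA_mul_le hirr hmem k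
  have herr := abs_cfErr_le hirr hmem k
  have hq1R : ((cfQ α k : ℝ) + 1) * cfQ α k ≤ (cfQ α (k+1) : ℝ) := by exact_mod_cast hq1
  have hqq : (0:ℝ) < cfQ α (k+1) := by exact_mod_cast cfQ_pos hirr hmem (k+1)
  have hmain : |α - (cfP α k : ℝ) / cfQ α k| ≤ 1 / (cfQ α k : ℝ)^3 := by
    have e1 : α - (cfP α k : ℝ) / cfQ α k = cfErr α k / cfQ α k := by
      rw [cfErr]
      field_simp
      try ring
    rw [e1, abs_div, abs_of_pos hq]
    calc |cfErr α k| / (cfQ α k : ℝ) ≤ (1 / (cfQ α (k+1) : ℝ)) / cfQ α k :=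
          div_le_div_of_nonneg_right herr hq.le
      _ ≤ 1 / (cfQ α k : ℝ)^3 := by
          rw [div_div]
          apply one_div_le_one_div_of_le (by positivity)
          nlinarith
  rw [Bset, Set.mem_iUnion₂]
  refine ⟨cfP α k, ?_, ?_⟩
  · simp only [Finset.mem_coe, Finset.mem_range]
    exact Nat.lt_succ_of_le (cfP_le_cfQ hirr hmem k)
  · rw [Metric.mem_closedBall, Real.dist_eq]
    exact hmain
set_option maxHeartbeats 2000000 in
lemma conj2 (hirr : Irrational α) (hmem : α ∈ Set.Ioo (0:ℝ) 1) {K : ℕ}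
    (hK : ∀ k, K ≤ k → cfA α (k+1) ≤ cfQ α k) :
    ∃ c : ℝ, 0 < c ∧ ∀ᶠ M : ℕ in atTop, c * M * Real.log M ≤ S α M := by
  refine ⟨1/8, by norm_num, ?_⟩
  rw [eventually_atTop]
  refine ⟨max 512 (cfQ α (K+1)), fun M hM => ?_⟩
  have hM1 : 512 ≤ M := le_trans (le_max_left _ _) hM
  have hM2 : cfQ α (K+1) ≤ M := le_trans (le_max_right _ _) hM
  have hKM : K + 1 ≤ M := le_trans (cfQ_ge_self hirr hmem (K+1)) hM2
  set k := Nat.findGreatest (fun j => cfQ α j ≤ M) M with hkdef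
  have hk1 : K + 1 ≤ k := Nat.le_findGreatest hKM hM2
  have hk2 : cfQ α k ≤ M := Nat.findGreatest_spec (P := fun j => cfQ α j ≤ M) hKM hM2
  have hk3 : M < cfQ α (k+1) := by
    by_cases h : k + 1 ≤ M
    · have h2 : ¬ (cfQ α (k+1) ≤ M) := Nat.findGreatest_is_greatest (P := fun j => cfQ α j ≤ M) (Nat.lt_succ_self k) h
      omega
    · have h2 : M ≤ k := by omega
      have h3 := cfQ_ge_self hirr hmem (k+1)
      omega
  obtain ⟨j0, hj0⟩ : ∃ j0, k = j0 + 1 := ⟨k - 1, by omega⟩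
  have hq2 : cfQ α (k+1) ≤ 2 * cfQ α k * cfQ α k := by
    rw [hj0]
    show cfQ α (j0+2) ≤ _
    rw [cfQ]
    have hA : cfA α (j0+2) ≤ cfQ α (j0+1) := hK (j0+1) (by omega)
    have hmono : cfQ α j0 ≤ cfQ α (j0+1) := cfQ_le_succ hirr hmem j0
    have hpos := cfQ_pos hirr hmem (j0+1)
    nlinarith
  set q := cfQ α k with hqdef
  set p := cfP α k with hpdef
  have hqpos : 1 ≤ q := cfQ_pos hirr hmem k
  have hq17 : 17 ≤ q := by nlinarith [hk2, hk3, hq2, hM1]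
  set T := M / q with hTdef
  have hT1 : 1 ≤ T := (Nat.one_le_div_iff (by omega)).mpr hk2
  have hTq : T * q ≤ M := Nat.div_mul_le_self M q
  have hMT : M < (T+1) * q := (Nat.div_lt_iff_lt_mul (by omega)).mp (Nat.lt_succ_self T)
  -- real versions
  have hqR : (17:ℝ) ≤ (q:ℝ) := by exact_mod_cast hq17
  have hqR0 : (0:ℝ) < (q:ℝ) := by linarith
  have hq1R0 : (0:ℝ) < (cfQ α (k+1) : ℝ) := by exact_mod_cast cfQ_pos hirr hmem (k+1)
  have hMR : (512:ℝ) ≤ (M:ℝ) := by exact_mod_cast hM1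
  have hMk : (M:ℝ) < (cfQ α (k+1) : ℝ) := by exact_mod_cast hk3
  have hq2R : (cfQ α (k+1) : ℝ) ≤ 2 * q * q := by exact_mod_cast hq2
  have hco : Nat.Coprime p q := cfCoprime hirr hmem k
  clear_value k q p T
  -- per-term bound
  have key_term : ∀ t, t < T → ∀ m', 1 ≤ m' → m' ≤ q - 1 →
      (q:ℝ) / (((m' * p) % q : ℕ) + 1) ≤ 1 / nd (((t*q + m' : ℕ) : ℝ) * α) := by
    intro t ht m' hm1 hm2
    have hm'q : m' < q := by omega
    set r := (m' * p) % q with hrdef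
    set D := (m' * p) / q with hDdef
    have hdm : q * D + r = m' * p := Nat.div_add_mod (m' * p) q
    have habs : |cfErr α k| ≤ 1 / (cfQ α (k+1) : ℝ) := abs_cfErr_le hirr hmem k
    have htq1 : (t+1) * q ≤ cfQ α (k+1) := by
      have h1 : (t+1) * q ≤ T * q := Nat.mul_le_mul_right q (by omega)
      omega
    have htq1R : ((t:ℝ)+1) * q ≤ (cfQ α (k+1) : ℝ) := by exact_mod_cast htq1
    have hN : ((t*q + m' : ℕ) : ℝ) * α - ((t*p + D : ℕ) : ℝ)
        = (t:ℝ) * cfErr α k + ((r:ℝ) + (m':ℝ) * cfErr α k) / q := by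
      have hdmR : (q:ℝ) * D + (r:ℝ) = (m':ℝ) * (p:ℝ) := by exact_mod_cast hdm
      rw [cfErr, ← hqdef, ← hpdef]
      push_cast
      field_simp
      linear_combination -hdmR
    have hnd : nd (((t*q + m' : ℕ) : ℝ) * α) ≤ ((r:ℝ) + 1) / q := by
      have h1 : nd (((t*q + m' : ℕ) : ℝ) * α) ≤ |((t*q+m':ℕ) : ℝ)*α - ((t*p + D : ℕ):ℝ)| := by
        have h0 := nd_le (((t*q + m' : ℕ) : ℝ) * α) ((t*p + D : ℕ) : ℤ)
        simpa using h0
      rw [hN] at h1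
      have habs2 : |(t:ℝ) * cfErr α k + ((r:ℝ) + (m':ℝ) * cfErr α k) / q|
          ≤ (t:ℝ) * |cfErr α k| + ((r:ℝ) + (m':ℝ) * |cfErr α k|) / q := by
        calc |(t:ℝ) * cfErr α k + ((r:ℝ) + (m':ℝ) * cfErr α k) / q|
            ≤ |(t:ℝ) * cfErr α k| + |((r:ℝ) + (m':ℝ) * cfErr α k) / q| := abs_add_le _ _
          _ = (t:ℝ) * |cfErr α k| + |(r:ℝ) + (m':ℝ) * cfErr α k| / q := by
              rw [abs_mul, abs_div, Nat.abs_cast, abs_of_pos hqR0]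
          _ ≤ (t:ℝ) * |cfErr α k| + ((r:ℝ) + (m':ℝ) * |cfErr α k|) / q := by
              have : |(r:ℝ) + (m':ℝ) * cfErr α k| ≤ (r:ℝ) + (m':ℝ) * |cfErr α k| := by
                calc |(r:ℝ) + (m':ℝ) * cfErr α k| ≤ |(r:ℝ)| + |(m':ℝ) * cfErr α k| := abs_add_le _ _
                  _ = (r:ℝ) + (m':ℝ) * |cfErr α k| := by rw [Nat.abs_cast, abs_mul, Nat.abs_cast]
              have h2 := div_le_div_of_nonneg_right this hqR0.le
              linarith
      have hE2 : |cfErr α k| * (cfQ α (k+1) : ℝ) ≤ 1 := by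
        rw [← le_div_iff₀ hq1R0]
        exact habs
      have hm'R : (m':ℝ) ≤ (q:ℝ) := by exact_mod_cast hm'q.le
      have hmain : (t:ℝ) * |cfErr α k| * q + ((r:ℝ) + (m':ℝ) * |cfErr α k|) ≤ (r:ℝ) + 1 := by
        nlinarith [abs_nonneg (cfErr α k), mul_le_mul_of_nonneg_left htq1R (abs_nonneg (cfErr α k)), hE2]
      have hL : (t:ℝ) * |cfErr α k| + ((r:ℝ) + (m':ℝ) * |cfErr α k|) / q
          = ((t:ℝ) * |cfErr α k| * q + ((r:ℝ) + (m':ℝ) * |cfErr α k|)) / q := by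
        field_simp
      have h3 := div_le_div_of_nonneg_right hmain hqR0.le
      rw [hL] at habs2
      linarith
    have hirr2 : Irrational (((t*q + m' : ℕ) : ℝ) * α) := hirr.natCast_mul (by omega)
    have hnd0 : 0 < nd (((t*q + m' : ℕ) : ℝ) * α) := nd_pos hirr2
    have h4 := one_div_le_one_div_of_le hnd0 hnd
    calc (q:ℝ)/((r:ℝ)+1) = 1/(((r:ℝ)+1)/q) := by
          rw [one_div_div]
      _ ≤ 1 / nd (((t*q + m' : ℕ) : ℝ) * α) := h4
  -- inner sum bound
  have hinner : ∀ t, t < T →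
      (q:ℝ) * (Real.log q - 1) ≤ ∑ m' ∈ Finset.Icc 1 (q-1), 1 / nd (((t*q + m' : ℕ):ℝ) * α) := by
    intro t ht
    have hstep1 : ∑ m' ∈ Finset.Icc 1 (q-1), (q:ℝ)/(((m' * p) % q : ℕ) + 1)
        ≤ ∑ m' ∈ Finset.Icc 1 (q-1), 1 / nd (((t*q + m' : ℕ):ℝ) * α) := by
      apply Finset.sum_le_sum
      intro m' hm'
      rw [Finset.mem_Icc] at hm'
      exact key_term t ht m' hm'.1 hm'.2
    refine le_trans ?_ hstep1
    have hinj : ∀ a ∈ Finset.Icc 1 (q-1), ∀ b ∈ Finset.Icc 1 (q-1),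
        (a * p) % q = (b * p) % q → a = b := by
      intro a ha b hb hab
      rw [Finset.mem_Icc] at ha hb
      have h1 : a * p ≡ b * p [MOD q] := hab
      have h2 : a ≡ b [MOD q] := h1.cancel_right_of_coprime hco.symm
      have h3 : a % q = a := Nat.mod_eq_of_lt (by omega)
      have h4 : b % q = b := Nat.mod_eq_of_lt (by omega)
      rwa [Nat.ModEq, h3, h4] at h2
    have himg : (Finset.Icc 1 (q-1)).image (fun m' => (m' * p) % q) = Finset.Icc 1 (q-1) := by
      apply Finset.eq_of_subset_of_card_le
      · intro r hr
        simp only [Finset.mem_image, Finset.mem_Icc] at hr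
        obtain ⟨m', ⟨hm1, hm2⟩, rfl⟩ := hr
        rw [Finset.mem_Icc]
        have hlt : (m' * p) % q < q := Nat.mod_lt _ (by omega)
        have hne : (m' * p) % q ≠ 0 := by
          intro h0
          have hdvd : q ∣ m' * p := Nat.dvd_of_mod_eq_zero h0
          have hdvd2 : q ∣ m' := (Nat.Coprime.dvd_of_dvd_mul_right (hco.symm) hdvd)
          have := Nat.le_of_dvd (by omega) hdvd2
          omega
        omega
      · rw [Finset.card_image_of_injOn (fun a ha b hb hab => hinj a ha b hb hab)]
    have hre : ∑ m' ∈ Finset.Icc 1 (q-1), (q:ℝ)/(((m' * p) % q : ℕ) + 1)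
        = ∑ r ∈ Finset.Icc 1 (q-1), (q:ℝ)/((r:ℝ)+1) := by
      conv_rhs => rw [← himg]
      rw [Finset.sum_image hinj]
    rw [hre]
    have hlog := aux_log_sum (q-1)
    have hcast : (((q-1:ℕ)):ℝ) = (q:ℝ) - 1 := by
      push_cast [Nat.cast_sub (by omega : 1 ≤ q)]
      ring
    rw [hcast] at hlog
    have e1 : (q:ℝ) - 1 + 2 = (q:ℝ) + 1 := by ring
    rw [e1] at hlog
    have hlog2 : Real.log q ≤ Real.log ((q:ℝ)+1) := Real.log_le_log (by positivity) (by linarith)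
    have hsum : ∑ r ∈ Finset.Icc 1 (q-1), (q:ℝ)/((r:ℝ)+1)
        = (q:ℝ) * ∑ r ∈ Finset.Icc 1 (q-1), (1:ℝ)/((r:ℝ)+1) := by
      rw [Finset.mul_sum]
      apply Finset.sum_congr rfl
      intro r _
      rw [mul_one_div]
    rw [hsum]
    have hsn : Real.log q - 1 ≤ ∑ r ∈ Finset.Icc 1 (q-1), (1:ℝ)/((r:ℝ)+1) := by linarith
    exact mul_le_mul_of_nonneg_left hsn hqR0.le
  -- numeric facts
  have hlogq : 2 ≤ Real.log q := by
    have h16 : Real.log 16 ≤ Real.log q := Real.log_le_log (by norm_num) (by linarith)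
    have : Real.log 16 = 4 * Real.log 2 := by
      rw [show (16:ℝ) = 2^4 by norm_num, Real.log_pow]
      push_cast
      ring
    nlinarith [Real.log_two_gt_d9]
  have hlogM1 : Real.log M ≤ Real.log 2 + 2 * Real.log q := by
    have h1 : Real.log M ≤ Real.log (2 * q * q) := Real.log_le_log (by linarith) (by nlinarith)
    have h2 : Real.log (2 * (q:ℝ) * q) = Real.log 2 + Real.log q + Real.log q := by
      rw [Real.log_mul (by positivity) (by positivity), Real.log_mul (by positivity) (by positivity)]
    linarith
  have hlogM2 : 9 * Real.log 2 ≤ Real.log M := by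
    have h1 : Real.log 512 ≤ Real.log M := Real.log_le_log (by norm_num) (by linarith)
    have h2 : Real.log 512 = 9 * Real.log 2 := by
      rw [show (512:ℝ) = 2^9 by norm_num, Real.log_pow]
      push_cast
      ring
    linarith
  -- outer assembly
  have hFinj : ∀ a ∈ Finset.range T ×ˢ Finset.Icc 1 (q-1), ∀ b ∈ Finset.range T ×ˢ Finset.Icc 1 (q-1),
      a.1 * q + a.2 = b.1 * q + b.2 → a = b := by
    intro a ha b hb hab
    simp only [Finset.mem_product, Finset.mem_range, Finset.mem_Icc] at ha hb
    have h1 : (a.1 * q + a.2) % q = a.2 := by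
      rw [Nat.add_mod, Nat.mul_mod_left]
      simp [Nat.mod_eq_of_lt (show a.2 < q by omega)]
    have h2 : (b.1 * q + b.2) % q = b.2 := by
      rw [Nat.add_mod, Nat.mul_mod_left]
      simp [Nat.mod_eq_of_lt (show b.2 < q by omega)]
    have h3 : a.2 = b.2 := by rw [← h1, ← h2, hab]
    have h4 : a.1 * q = b.1 * q := by omega
    have h5 : a.1 = b.1 := Nat.eq_of_mul_eq_mul_right (by omega) h4
    exact Prod.ext h5 h3
  have hFsub : (Finset.range T ×ˢ Finset.Icc 1 (q-1)).image (fun tm : ℕ × ℕ => tm.1 * q + tm.2)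
      ⊆ Finset.Icc 1 M := by
    intro x hx
    simp only [Finset.mem_image, Finset.mem_product, Finset.mem_range, Finset.mem_Icc] at hx
    obtain ⟨⟨t, m'⟩, ⟨⟨ht, hm1, hm2⟩, rfl⟩⟩ := hx
    rw [Finset.mem_Icc]
    have h1 : (t+1) * q ≤ T * q := Nat.mul_le_mul_right q (by omega)
    have h3 : (t+1)*q = t*q + q := by ring
    constructor
    · simp only
      omega
    · simp only
      omega
  have hchain : (T:ℝ) * ((q:ℝ) * (Real.log q - 1)) ≤ S α M := by
    calc (T:ℝ) * ((q:ℝ) * (Real.log q - 1))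
        = ∑ _t ∈ Finset.range T, (q:ℝ) * (Real.log q - 1) := by
          rw [Finset.sum_const, Finset.card_range, nsmul_eq_mul]
      _ ≤ ∑ t ∈ Finset.range T, ∑ m' ∈ Finset.Icc 1 (q-1), 1 / nd (((t*q + m' : ℕ):ℝ) * α) := by
          apply Finset.sum_le_sum
          intro t ht
          exact hinner t (Finset.mem_range.mp ht)
      _ = ∑ tm ∈ Finset.range T ×ˢ Finset.Icc 1 (q-1), 1 / nd (((tm.1*q + tm.2 : ℕ):ℝ) * α) := by
          rw [Finset.sum_product]
      _ = ∑ m ∈ (Finset.range T ×ˢ Finset.Icc 1 (q-1)).image (fun tm : ℕ × ℕ => tm.1 * q + tm.2),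
            1 / nd ((m:ℝ) * α) := by
          rw [Finset.sum_image hFinj]
      _ ≤ ∑ m ∈ Finset.Icc 1 M, 1 / nd ((m:ℝ) * α) := by
          apply Finset.sum_le_sum_of_subset_of_nonneg hFsub
          intro i _ _
          exact one_div_nonneg.mpr (nd_nonneg _)
      _ = S α M := rfl
  have hTqR : (M:ℝ)/2 ≤ (T:ℝ) * q := by
    have h1 : (M:ℝ) < ((T:ℕ):ℝ) * q + q := by
      have : (M:ℝ) < ((T+1) * q : ℕ) := by exact_mod_cast hMT
      push_cast at this
      linarith
    have h2 : (1:ℝ) ≤ T := by exact_mod_cast hT1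
    nlinarith
  have hfinal : (1/8:ℝ) * M * Real.log M ≤ (T:ℝ) * ((q:ℝ) * (Real.log q - 1)) := by
    have hlM : Real.log M ≤ 4 * Real.log q - 4 := by
      nlinarith [Real.log_two_gt_d9, Real.log_two_lt_d9]
    have hMR0 : (0:ℝ) < M := by linarith
    have h1 : (1/8:ℝ) * M * Real.log M ≤ (M:ℝ)/2 * (Real.log q - 1) := by
      nlinarith [hMR0, hlogq, hlogM2, Real.log_two_gt_d9]
    have h2 : (M:ℝ)/2 * (Real.log q - 1) ≤ (T:ℝ) * q * (Real.log q - 1) := by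
      nlinarith [hTqR, hlogq]
    nlinarith [h1, h2]
  linarith [hchain, hfinal]

theorem ae_lower_bound :
    ∀ᵐ α ∂(MeasureTheory.volume.restrict (Set.Ioo (0:ℝ) 1)),
      (∀ᶠ k : ℕ in Filter.atTop, cfA α (k+1) ≤ cfQ α k) ∧
      ∃ c : ℝ, 0 < c ∧ ∀ᶠ M : ℕ in Filter.atTop,
        c * M * Real.log M ≤ S α M := by
  have hB : ∀ᵐ α ∂(volume : Measure ℝ), ∀ᶠ n in atTop, α ∉ Bset n :=
    MeasureTheory.ae_eventually_notMem Bset_sum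
  have hIrr : ∀ᵐ α ∂(volume : Measure ℝ), Irrational α := by
    rw [ae_iff]
    have he : {a : ℝ | ¬Irrational a} = Set.range ((↑) : ℚ → ℝ) := by
      ext x
      simp [Irrational]
    rw [he]
    exact (Set.countable_range _).measure_zero _
  have h1 := ae_restrict_of_ae (s := Set.Ioo (0:ℝ) 1) hB
  have h2 := ae_restrict_of_ae (s := Set.Ioo (0:ℝ) 1) hIrr
  have h3 : ∀ᵐ α ∂(volume.restrict (Set.Ioo (0:ℝ) 1)), α ∈ Set.Ioo (0:ℝ) 1 :=
    ae_restrict_mem measurableSet_Ioo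
  filter_upwards [h1, h2, h3] with α hB' hirr hmem
  have hc1 := conj1 hirr hmem hB'
  obtain ⟨K, hK⟩ := eventually_atTop.mp hc1
  exact ⟨hc1, conj2 hirr hmem hK⟩
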